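/- arXiv:1810.12231 — 6 statements merged into one kernel-verified Lean document; each statement's English description precedes it below -/
import Mathlib

section
/- Let A ∈ ℝ^{n×n}, B ∈ ℝ^{n×m}, C ∈ ℝ^{p×n}, Q ∈ ℝ^{p×p} symmetric positive definite, and λ ∈ ℂ purely imaginary. Assume (i) the pair (A,B) is stabilizable, i.e., rank[μI−A, B] = n for every μ ∈ ℂ with Re(μ) ≥ 0, and (ii) the Rosenbrock matrix [[λI−A, −B],[C, 0]] has full column rank n+m. Then the matrix P_H^y(λ) = [[0, λI−A, B],[−λI−Aᵀ, −Cᵀ Q C, 0],[−Bᵀ, 0, 0]] ∈ ℂ^{(2n+m)×(2n+m)} is invertible. -/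
open Matrix

lemma injAux {k l : Type*} [Fintype k] [Fintype l] [DecidableEq l]
    (M : Matrix k l ℂ) (h : M.rank = Fintype.card l) {v : l → ℂ} (hv : M *ᵥ v = 0) : v = 0 := by
  have h1 := LinearMap.finrank_range_add_finrank_ker M.mulVecLin
  rw [Module.finrank_fintype_fun_eq_card] at h1
  rw [Matrix.rank] at h
  have hker : LinearMap.ker M.mulVecLin = ⊥ := Submodule.finrank_eq_zero.mp (by omega)
  have : v ∈ LinearMap.ker M.mulVecLin := by simpa [Matrix.mulVecLin] using hv
  simpa [hker] using this

lemma star_mulVec' {k l : Type*} [Fintype l] (M : Matrix k l ℂ) (v : l → ℂ) :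
    star (M *ᵥ v) = M.map star *ᵥ star v := by
  funext i
  simp [mulVec, dotProduct, Matrix.map_apply, star_mul']

lemma map_star_ofReal {k l : Type*} (M : Matrix k l ℝ) :
    (M.map Complex.ofReal).map star = M.map Complex.ofReal := by
  funext i j; simp [Matrix.map_apply, Complex.conj_ofReal]

lemma qposAux {p : ℕ} {Q : Matrix (Fin p) (Fin p) ℝ} (hQ : Q.PosDef) (z : Fin p → ℂ)
    (h : star z ⬝ᵥ (Q.map Complex.ofReal *ᵥ z) = 0) : z = 0 := by
  set a : Fin p → ℝ := fun i => (z i).re with ha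
  set b : Fin p → ℝ := fun i => (z i).im with hb
  have hre : (star z ⬝ᵥ (Q.map Complex.ofReal *ᵥ z)).re = a ⬝ᵥ (Q *ᵥ a) + b ⬝ᵥ (Q *ᵥ b) := by
    simp only [dotProduct, mulVec, Finset.mul_sum, Complex.re_sum, Pi.star_apply,
      Matrix.map_apply, Complex.mul_re, Complex.mul_im, Complex.ofReal_re, Complex.ofReal_im,
      Complex.star_def, Complex.conj_re, Complex.conj_im]
    rw [← Finset.sum_add_distrib]
    refine Finset.sum_congr rfl fun i _ => ?_
    rw [← Finset.sum_add_distrib]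
    refine Finset.sum_congr rfl fun j _ => ?_
    ring
  rw [h, Complex.zero_re] at hre
  have hsa : (0:ℝ) ≤ a ⬝ᵥ (Q *ᵥ a) := by simpa using hQ.posSemidef.dotProduct_mulVec_nonneg a
  have hsb : (0:ℝ) ≤ b ⬝ᵥ (Q *ᵥ b) := by simpa using hQ.posSemidef.dotProduct_mulVec_nonneg b
  have hza : a = 0 := by
    by_contra hne
    have := hQ.dotProduct_mulVec_pos hne
    simp only [star_trivial] at this
    linarith
  have hzb : b = 0 := by
    by_contra hne
    have := hQ.dotProduct_mulVec_pos hne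
    simp only [star_trivial] at this
    linarith
  funext i
  exact Complex.ext (congrFun hza i) (congrFun hzb i)

theorem stmt2' {n m p : ℕ} (A : Matrix (Fin n) (Fin n) ℝ) (B : Matrix (Fin n) (Fin m) ℝ)
    (C : Matrix (Fin p) (Fin n) ℝ) (Q : Matrix (Fin p) (Fin p) ℝ)
    (hQ : Q.PosDef) (l : ℂ) (hl : l.re = 0)
    (hstab : ∀ μ : ℂ, 0 ≤ μ.re →
      (Matrix.fromCols (μ • 1 - A.map Complex.ofReal) (B.map Complex.ofReal)).rank = n)
    (hrank : (Matrix.fromBlocks (l • 1 - A.map Complex.ofReal) (-(B.map Complex.ofReal))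
        (C.map Complex.ofReal) (0 : Matrix (Fin p) (Fin m) ℂ)).rank = n + m) :
    IsUnit ((Matrix.fromBlocks
    (Matrix.fromBlocks 0 (l • 1 - A.map Complex.ofReal)
      (-(l • 1) - (A.map Complex.ofReal)ᵀ)
      (-((C.map Complex.ofReal)ᵀ * Q.map Complex.ofReal * C.map Complex.ofReal)))
    (Matrix.fromRows (B.map Complex.ofReal) 0)
    (Matrix.fromCols (-(B.map Complex.ofReal)ᵀ) 0) 0 :
      Matrix ((Fin n ⊕ Fin n) ⊕ Fin m) ((Fin n ⊕ Fin n) ⊕ Fin m) ℂ)) := by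
  set Ac := A.map Complex.ofReal with hAc
  set Bc := B.map Complex.ofReal with hBc
  set Cc := C.map Complex.ofReal with hCc
  set Qc := Q.map Complex.ofReal with hQc
  have hconj : (starRingEnd ℂ) l = -l := by
    apply Complex.ext <;> simp [hl]
  rw [Matrix.isUnit_iff_isUnit_det, isUnit_iff_ne_zero]
  intro hdet
  obtain ⟨v, hv0, hv⟩ := (Matrix.exists_mulVec_eq_zero_iff).mpr hdet
  apply hv0
  set x : Fin n → ℂ := fun i => v (Sum.inl (Sum.inl i)) with hx0
  set y : Fin n → ℂ := fun i => v (Sum.inl (Sum.inr i)) with hy0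
  set u : Fin m → ℂ := fun i => v (Sum.inr i) with hu0
  have hvd : v = Sum.elim (Sum.elim x y) u := by
    funext j; rcases j with (j | j) | j <;> rfl
  rw [hvd, fromBlocks_mulVec] at hv
  simp only [Sum.elim_comp_inl, Sum.elim_comp_inr] at hv
  rw [fromBlocks_mulVec, fromRows_mulVec, fromCols_mulVec_sumElim] at hv
  simp only [Sum.elim_comp_inl, Sum.elim_comp_inr] at hv
  have E1 : (l • 1 - Ac) *ᵥ y + Bc *ᵥ u = 0 := by
    funext i
    have := congrFun hv (Sum.inl (Sum.inl i))
    simpa using this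
  have E2 : (-(l • 1) - Acᵀ) *ᵥ x + (-(Ccᵀ * Qc * Cc)) *ᵥ y = 0 := by
    funext i
    have := congrFun hv (Sum.inl (Sum.inr i))
    simpa using this
  have E3 : Bcᵀ *ᵥ x = 0 := by
    funext i
    have := congrFun hv (Sum.inr i)
    simpa [neg_mulVec] using this
  -- conjugated version of E3
  have hBxs : Bcᵀ *ᵥ star x = 0 := by
    have h := congrArg star E3
    rwa [star_mulVec', ← Matrix.transpose_map, map_star_ofReal, star_zero] at h
  -- star x ⬝ᵥ B u = 0
  have hxB : star x ⬝ᵥ (Bc *ᵥ u) = 0 := by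
    rw [dotProduct_mulVec, ← Matrix.mulVec_transpose, hBxs, zero_dotProduct]
  have hs : star x ⬝ᵥ ((l • 1 - Ac) *ᵥ y) = 0 := by
    have := congrArg (fun w => star x ⬝ᵥ w) E1
    simpa [dotProduct_add, hxB] using this
  -- map star of (l•1 - Ac)
  have hmap : (l • (1 : Matrix (Fin n) (Fin n) ℂ) - Ac).map star = -(l • 1) - Ac := by
    funext i j
    by_cases hij : i = j <;>
      simp [Matrix.map_apply, Matrix.sub_apply, Matrix.smul_apply, Matrix.one_apply, hij,
        Complex.star_def, hconj, hAc, Matrix.map_apply, Complex.conj_ofReal]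
  -- key: star y ⬝ᵥ ((-(l•1) - Acᵀ) *ᵥ x) = 0
  have key : star y ⬝ᵥ ((-(l • 1) - Acᵀ) *ᵥ x) = 0 := by
    have h := congrArg star hs
    rw [star_dotProduct, star_star, star_mulVec', hmap, star_zero] at h
    rw [dotProduct_mulVec, ← Matrix.mulVec_transpose]
    have ht : (-(l • (1 : Matrix (Fin n) (Fin n) ℂ)) - Acᵀ)ᵀ = -(l • 1) - Ac := by
      simp [Matrix.transpose_sub, Matrix.transpose_neg, Matrix.transpose_smul,
        Matrix.transpose_one]
    rw [ht]
    exact h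
  -- quadratic form vanishes
  have hQ0 : star (Cc *ᵥ y) ⬝ᵥ (Qc *ᵥ (Cc *ᵥ y)) = 0 := by
    have h := congrArg (fun w => star y ⬝ᵥ w) E2
    simp only [dotProduct_add, key, zero_add, dotProduct_zero, neg_mulVec,
      dotProduct_neg, neg_eq_zero] at h
    rw [← Matrix.mulVec_mulVec, ← Matrix.mulVec_mulVec, dotProduct_mulVec,
      ← Matrix.mulVec_transpose, Matrix.transpose_transpose] at h
    rwa [star_mulVec', map_star_ofReal]
  have hz : Cc *ᵥ y = 0 := qposAux hQ _ hQ0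
  have hcard : (fromBlocks (l • 1 - Ac) (-Bc) Cc (0 : Matrix (Fin p) (Fin m) ℂ)).rank =
      Fintype.card (Fin n ⊕ Fin m) := by simpa using hrank
  have hyu : Sum.elim y (-u) = 0 := by
    refine injAux _ hcard ?_
    rw [fromBlocks_mulVec]
    simp only [Sum.elim_comp_inl, Sum.elim_comp_inr]
    funext j
    rcases j with j | j
    · simpa [neg_mulVec, Matrix.mulVec_neg, neg_neg] using congrFun E1 j
    · simp [hz]
  have hy : y = 0 := funext fun i => congrFun hyu (Sum.inl i)
  have hu : u = 0 := by
    funext i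
    have := congrFun hyu (Sum.inr i)
    simpa [neg_eq_zero] using this
  have hx2 : (-(l • 1) - Acᵀ) *ᵥ x = 0 := by
    rw [hy] at E2
    simpa using E2
  have hmap2 : (-(l • (1 : Matrix (Fin n) (Fin n) ℂ)) - Acᵀ).map star = l • 1 - Acᵀ := by
    funext i j
    by_cases hij : i = j <;>
      simp [Matrix.map_apply, Matrix.sub_apply, Matrix.neg_apply, Matrix.smul_apply,
        Matrix.one_apply, Matrix.transpose_apply, hij, Complex.star_def, hconj, hAc,
        Complex.conj_ofReal]
  have hx3 : (l • 1 - Acᵀ) *ᵥ star x = 0 := by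
    have h := congrArg star hx2
    rwa [star_mulVec', hmap2, star_zero] at h
  have hst := hstab l (le_of_eq hl.symm)
  have hstT : ((fromCols (l • 1 - Ac) Bc)ᵀ).rank = Fintype.card (Fin n) := by
    rw [Matrix.rank_transpose, hst]; simp
  have hxs : star x = 0 := by
    refine injAux _ hstT ?_
    rw [Matrix.transpose_fromCols, fromRows_mulVec]
    funext j
    rcases j with j | j
    · have ht2 : (l • (1 : Matrix (Fin n) (Fin n) ℂ) - Ac)ᵀ = l • 1 - Acᵀ := by
        simp [Matrix.transpose_sub, Matrix.transpose_smul, Matrix.transpose_one]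
      simpa [ht2] using congrFun hx3 j
    · simpa using congrFun hBxs j
  have hx : x = 0 := by
    have := congrArg star hxs
    simpa using this
  rw [hvd, hx, hy, hu]
  funext j
  rcases j with (j | j) | j <;> simp

/-- Hamiltonian matrix `P_H^y(λ) = [[0, λI−A, B], [−λI−Aᵀ, −CᵀQC, 0], [−Bᵀ, 0, 0]]`. -/
noncomputable def HamMatY {n m p : ℕ} (A : Matrix (Fin n) (Fin n) ℝ) (B : Matrix (Fin n) (Fin m) ℝ)
    (C : Matrix (Fin p) (Fin n) ℝ) (Q : Matrix (Fin p) (Fin p) ℝ) (l : ℂ) :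
    Matrix ((Fin n ⊕ Fin n) ⊕ Fin m) ((Fin n ⊕ Fin n) ⊕ Fin m) ℂ :=
  Matrix.fromBlocks
    (Matrix.fromBlocks 0 (l • 1 - A.map Complex.ofReal)
      (-(l • 1) - (A.map Complex.ofReal)ᵀ)
      (-((C.map Complex.ofReal)ᵀ * Q.map Complex.ofReal * C.map Complex.ofReal)))
    (Matrix.fromRows (B.map Complex.ofReal) 0)
    (Matrix.fromCols (-(B.map Complex.ofReal)ᵀ) 0) 0

/-- Under stabilizability of `(A,B)` and full column rank of the Rosenbrock matrix at a
purely imaginary `λ`, the Hamiltonian matrix `P_H^y(λ)` is invertible. -/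
theorem stmt2 {n m p : ℕ} (A : Matrix (Fin n) (Fin n) ℝ) (B : Matrix (Fin n) (Fin m) ℝ)
    (C : Matrix (Fin p) (Fin n) ℝ) (Q : Matrix (Fin p) (Fin p) ℝ)
    (hQ : Q.PosDef) (l : ℂ) (hl : l.re = 0)
    (hstab : ∀ μ : ℂ, 0 ≤ μ.re →
      (Matrix.fromCols (μ • 1 - A.map Complex.ofReal) (B.map Complex.ofReal)).rank = n)
    (hrank : (Matrix.fromBlocks (l • 1 - A.map Complex.ofReal) (-(B.map Complex.ofReal))
        (C.map Complex.ofReal) (0 : Matrix (Fin p) (Fin m) ℂ)).rank = n + m) :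
    IsUnit (HamMatY A B C Q l) := by
  unfold HamMatY
  exact stmt2' A B C Q hQ l hl hstab hrank
end

section
/- Let A ∈ ℝ^{n×n}, B ∈ ℝ^{n×m}, C ∈ ℝ^{p×n}, Q ∈ ℝ^{p×p} symmetric positive definite, λ ∈ ℂ purely imaginary, and suppose (A,B) is stabilizable. If the matrix P_H^y(λ) = [[0, λI−A, B],[−λI−Aᵀ, −CᵀQC, 0],[−Bᵀ, 0, 0]] is invertible, then the Rosenbrock matrix [[λI−A, −B],[C, 0]] has full column rank n+m. -/
open Matrix

/-- If `P_H^y(λ)` is invertible (with `(A,B)` stabilizable, `Q ≻ 0`, `λ` purely imaginary),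
then the Rosenbrock matrix has full column rank `n + m`. -/
theorem stmt3 {n m p : ℕ} (A : Matrix (Fin n) (Fin n) ℝ) (B : Matrix (Fin n) (Fin m) ℝ)
    (C : Matrix (Fin p) (Fin n) ℝ) (Q : Matrix (Fin p) (Fin p) ℝ)
    (hQ : Q.PosDef) (l : ℂ) (hl : l.re = 0)
    (hstab : ∀ μ : ℂ, 0 ≤ μ.re →
      (Matrix.fromCols (μ • 1 - A.map Complex.ofReal) (B.map Complex.ofReal)).rank = n)
    (hinv : IsUnit (HamMatY A B C Q l)) :
    (Matrix.fromBlocks (l • 1 - A.map Complex.ofReal) (-(B.map Complex.ofReal))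
        (C.map Complex.ofReal) (0 : Matrix (Fin p) (Fin m) ℂ)).rank = n + m := by
  set A' := A.map Complex.ofReal
  set B' := B.map Complex.ofReal
  set C' := C.map Complex.ofReal
  set M : Matrix (Fin n ⊕ Fin p) (Fin n ⊕ Fin m) ℂ :=
    Matrix.fromBlocks (l • 1 - A') (-B') C' 0 with hM
  -- injectivity of the Hamiltonian matrix
  have hHinj : Function.Injective (HamMatY A B C Q l).mulVec :=
    Matrix.mulVec_injective_iff_isUnit.mpr hinv
  -- kernel of M is trivial
  have hker : ∀ v : (Fin n ⊕ Fin m) → ℂ, M *ᵥ v = 0 → v = 0 := by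
    intro v hv
    set x : Fin n → ℂ := v ∘ Sum.inl
    set u : Fin m → ℂ := v ∘ Sum.inr
    have h1 : (l • 1 - A') *ᵥ x + (-B') *ᵥ u = 0 := by
      have := congrFun hv
      have h := funext fun i => this (Sum.inl i)
      ext i; simpa [hM, Matrix.fromBlocks_mulVec] using congrFun h i
    have h2 : C' *ᵥ x = 0 := by
      have := congrFun hv
      have h := funext fun i => this (Sum.inr i)
      ext i; simpa [hM, Matrix.fromBlocks_mulVec] using congrFun h i
    -- the candidate kernel vector of the Hamiltonian matrix
    set w : ((Fin n ⊕ Fin n) ⊕ Fin m) → ℂ := Sum.elim (Sum.elim 0 x) (-u)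
    have hw : (HamMatY A B C Q l) *ᵥ w = 0 := by
      unfold HamMatY
      ext i
      rcases i with (i | i) | i <;>
        simp [w, Matrix.fromBlocks_mulVec, Matrix.fromRows_mulVec,
          Matrix.fromCols_mulVec_sumElim, Matrix.mulVec_add, Matrix.mulVec_smul]
      · have := congrFun h1 i
        simpa [Matrix.neg_mulVec, Matrix.mulVec_neg, sub_eq_iff_eq_add, add_comm] using this
      · have : ((C')ᵀ * Q.map Complex.ofReal) *ᵥ (C' *ᵥ x) = 0 := by
          rw [h2, Matrix.mulVec_zero]
        have h3 : ((C')ᵀ * Q.map Complex.ofReal * C') *ᵥ x = 0 := by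
          rwa [Matrix.mulVec_mulVec] at this
        simpa [Matrix.neg_mulVec] using congrFun h3 i
    have hw0 : w = 0 := by
      have := hHinj (a₂ := 0) (by simpa using hw)
      simpa using this
    ext j
    rcases j with j | j
    · have := congrFun hw0 (Sum.inl (Sum.inr j))
      simpa [w, x] using this
    · have := congrFun hw0 (Sum.inr j)
      simpa [w, u] using this
  -- conclude the rank
  have hinj : Function.Injective M.mulVecLin := by
    rw [← LinearMap.ker_eq_bot]
    ext v
    simp only [LinearMap.mem_ker, Submodule.mem_bot, Matrix.mulVecLin_apply]
    exact ⟨fun h => hker v h, fun h => by simp [h]⟩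
  have := LinearMap.finrank_range_of_inj hinj
  rw [Matrix.rank, this]
  simp [Module.finrank_pi]
end

section
/- Let Ā ∈ ℝ^{n̄×n̄} be diagonalizable with all eigenvalues purely imaginary, and let G ∈ ℝ^{g×n̄}. Suppose the pair (G, Ā) is completely observable. Then for every x̄₀ ∈ ℝ^{n̄} with x̄₀ ≠ 0, the limit lim_{T→∞} (1/T) ∫₀^T ‖G e^{Āt} x̄₀‖² dt exists and is strictly positive. -/
open Matrix

open NormedSpace Filter

lemma avg_cexp (μ : ℂ) (hμ : μ.re = 0) :
    Tendsto (fun T : ℝ => (1 / (T:ℂ)) * ∫ t in (0:ℝ)..T, Complex.exp (μ * t))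
      atTop (nhds (if μ = 0 then 1 else 0)) := by
  by_cases h : μ = 0
  · rw [if_pos h]
    apply Tendsto.congr' _ tendsto_const_nhds
    filter_upwards [eventually_gt_atTop (0:ℝ)] with T hT
    simp [h, intervalIntegral.integral_const, Complex.ofReal_ne_zero.mpr hT.ne',
      div_mul_cancel₀]
  · rw [if_neg h]
    have habs : ∀ s : ℝ, ‖Complex.exp (μ * s)‖ = 1 := fun s => by
      rw [Complex.norm_exp]; simp [Complex.mul_re, hμ]
    apply squeeze_zero_norm' (a := fun T : ℝ => (2 / ‖μ‖) * (1/T))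
    · filter_upwards [eventually_ge_atTop (1:ℝ)] with T hT
      have hT0 : (0:ℝ) < T := lt_of_lt_of_le one_pos hT
      rw [integral_exp_mul_complex h, norm_mul, norm_div, norm_div]
      have h1T : ‖(1:ℂ)‖ / ‖(T:ℂ)‖ = 1/T := by
        rw [norm_one, Complex.norm_real, Real.norm_eq_abs, abs_of_pos hT0]
      rw [h1T, mul_comm]
      gcongr
      calc ‖Complex.exp (μ * T) - Complex.exp (μ * 0)‖
          ≤ ‖Complex.exp (μ * (T:ℝ))‖ + ‖Complex.exp (μ * ((0:ℝ):ℂ))‖ := by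
            apply norm_sub_le
        _ ≤ 2 := by rw [habs T, habs 0]; norm_num
    · have : Tendsto (fun T:ℝ => (1:ℝ)/T) atTop (nhds 0) := by
        simpa using tendsto_inv_atTop_zero
      simpa using this.const_mul (2 / ‖μ‖)

lemma exp_map_ofReal {n : ℕ} (B : Matrix (Fin n) (Fin n) ℝ) :
    (exp B).map Complex.ofReal = exp (B.map Complex.ofReal) := by
  letI : SeminormedRing (Matrix (Fin n) (Fin n) ℝ) := Matrix.linftyOpSemiNormedRing
  letI : NormedRing (Matrix (Fin n) (Fin n) ℝ) := Matrix.linftyOpNormedRing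
  letI : NormedAlgebra ℝ (Matrix (Fin n) (Fin n) ℝ) := Matrix.linftyOpNormedAlgebra
  letI : SeminormedRing (Matrix (Fin n) (Fin n) ℂ) := Matrix.linftyOpSemiNormedRing
  letI : NormedRing (Matrix (Fin n) (Fin n) ℂ) := Matrix.linftyOpNormedRing
  letI : NormedAlgebra ℝ (Matrix (Fin n) (Fin n) ℂ) := Matrix.linftyOpNormedAlgebra
  letI : NormedAlgebra ℂ (Matrix (Fin n) (Fin n) ℂ) := Matrix.linftyOpNormedAlgebra
  letI : NormedAlgebra ℚ (Matrix (Fin n) (Fin n) ℝ) := NormedAlgebra.restrictScalars ℚ ℝ _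
  have h1 : (Complex.ofRealHom.mapMatrix : Matrix (Fin n) (Fin n) ℝ →+* Matrix (Fin n) (Fin n) ℂ)
      (exp B) = exp (Complex.ofRealHom.mapMatrix B) :=
    map_exp _ (continuous_id.matrix_map Complex.continuous_ofReal) B
  have h2 : (exp : Matrix (Fin n) (Fin n) ℂ → _) = exp := rfl
  exact h1

lemma mulVec_coe {m n : ℕ} (M : Matrix (Fin m) (Fin n) ℝ) (v : Fin n → ℝ) (i : Fin m) :
    ((M.map Complex.ofReal).mulVec (fun j => (v j : ℂ))) i = ((M.mulVec v) i : ℂ) := by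
  simp [Matrix.mulVec, dotProduct]

lemma group_sum {n : ℕ} (d : Fin n → ℂ) (x : Fin n → ℂ) :
    ∑ j, ∑ k, (if d j = d k then x j * (starRingEnd ℂ) (x k) else 0)
      = ∑ lam ∈ Finset.univ.image d,
          ((∑ j ∈ Finset.univ.filter (fun j => d j = lam), x j) *
            (starRingEnd ℂ) (∑ j ∈ Finset.univ.filter (fun j => d j = lam), x j)) := by
  classical
  set u : ℂ → ℂ := fun lam => ∑ j ∈ Finset.univ.filter (fun j => d j = lam), x j with hu
  have h1 : ∀ j : Fin n, ∑ k, (if d j = d k then x j * (starRingEnd ℂ) (x k) else 0)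
      = x j * (starRingEnd ℂ) (u (d j)) := by
    intro j
    rw [hu, map_sum, Finset.mul_sum, ← Finset.sum_filter]
    apply Finset.sum_congr
    · ext k; simp [eq_comm]
    · intro k _; rfl
  rw [Finset.sum_congr rfl (fun j _ => h1 j)]
  rw [← Finset.sum_fiberwise_of_maps_to (g := d) (t := Finset.univ.image d)
      (fun j _ => Finset.mem_image_of_mem d (Finset.mem_univ j))]
  refine Finset.sum_congr rfl fun lam _ => ?_
  rw [Finset.sum_mul]
  refine Finset.sum_congr rfl fun j hj => ?_
  rw [Finset.mem_filter] at hj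
  rw [hj.2]

/-- If `Ā` is diagonalizable with purely imaginary spectrum and `(G, Ā)` is completely
observable, then the average output power is well-defined and strictly positive for every
nonzero initial condition. -/
theorem stmt4 {nb g : ℕ} (Ab : Matrix (Fin nb) (Fin nb) ℝ) (G : Matrix (Fin g) (Fin nb) ℝ)
    (hdiag : ∃ (P : Matrix (Fin nb) (Fin nb) ℂ) (d : Fin nb → ℂ),
      IsUnit P ∧ (∀ i, (d i).re = 0) ∧
        Ab.map Complex.ofReal = P * Matrix.diagonal d * P⁻¹)
    (hobs : ∀ (μ : ℂ) (v : Fin nb → ℂ), (Ab.map Complex.ofReal).mulVec v = μ • v →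
      (G.map Complex.ofReal).mulVec v = 0 → v = 0)
    (x0 : Fin nb → ℝ) (hx0 : x0 ≠ 0) :
    ∃ L : ℝ, 0 < L ∧
      Filter.Tendsto
        (fun T : ℝ => (1 / T) *
          ∫ t in (0:ℝ)..T, ∑ i, (G.mulVec ((NormedSpace.exp (t • Ab)).mulVec x0) i) ^ 2)
        Filter.atTop (nhds L) := by
  classical
  obtain ⟨P, d, hP, hre, hA⟩ := hdiag
  have hPdet : IsUnit P.det := (Matrix.isUnit_iff_isUnit_det P).mp hP
  set Ac : Matrix (Fin nb) (Fin nb) ℂ := Ab.map Complex.ofReal with hAc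
  set Gc : Matrix (Fin g) (Fin nb) ℂ := G.map Complex.ofReal with hGc
  set x0c : Fin nb → ℂ := fun j => (x0 j : ℂ) with hx0c
  set M : Matrix (Fin g) (Fin nb) ℂ := Gc * P with hM
  set c : Fin nb → ℂ := P⁻¹.mulVec x0c with hc
  set f : ℝ → ℝ :=
    fun t => ∑ i, (G.mulVec ((NormedSpace.exp (t • Ab)).mulVec x0) i) ^ 2 with hf
  -- the complex output formula
  have hexp : ∀ t : ℝ, (NormedSpace.exp (t • Ab)).map Complex.ofReal
      = P * Matrix.diagonal (fun j => Complex.exp (d j * t)) * P⁻¹ := by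
    intro t
    rw [exp_map_ofReal]
    have hsm : (t • Ab).map Complex.ofReal = (t:ℂ) • Ac := by
      ext i j; simp [hAc]
    rw [hsm, hA]
    have : (t:ℂ) • (P * Matrix.diagonal d * P⁻¹)
        = P * Matrix.diagonal (fun j => d j * t) * P⁻¹ := by
      have hdg : Matrix.diagonal (fun j => d j * (t:ℂ)) = (t:ℂ) • Matrix.diagonal d := by
        ext i j
        rcases eq_or_ne i j with h | h <;> simp [Matrix.diagonal_apply, h, mul_comm]
      rw [hdg, mul_smul_comm, smul_mul_assoc]
    rw [this, Matrix.exp_conj P _ hP, Matrix.exp_diagonal]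
    congr 1
    funext j
    rw [Pi.exp_def, ← Complex.exp_eq_exp_ℂ]
  have hz : ∀ (t : ℝ) (i : Fin g),
      ((G.mulVec ((NormedSpace.exp (t • Ab)).mulVec x0) i : ℝ) : ℂ)
        = ∑ j, M i j * Complex.exp (d j * t) * c j := by
    intro t i
    rw [← mulVec_coe]
    have : (fun j => ((((NormedSpace.exp (t • Ab)).mulVec x0)) j : ℂ))
        = ((NormedSpace.exp (t • Ab)).map Complex.ofReal).mulVec x0c := by
      funext j; rw [hx0c]; exact (mulVec_coe _ _ _).symm
    rw [this, hexp t, ← hGc, Matrix.mulVec_mulVec, ← Matrix.mul_assoc, ← Matrix.mul_assoc,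
      ← Matrix.mulVec_mulVec, ← hc]
    simp only [Matrix.mulVec, dotProduct, Matrix.mul_diagonal, hM]
  -- the key pointwise identity
  set a : Fin g × Fin nb × Fin nb → ℂ :=
    fun p => (M p.1 p.2.1 * c p.2.1) * (starRingEnd ℂ) (M p.1 p.2.2 * c p.2.2) with ha
  set μ : Fin g × Fin nb × Fin nb → ℂ := fun p => d p.2.1 - d p.2.2 with hμdef
  have hkey : ∀ t : ℝ, ((f t : ℝ) : ℂ) = ∑ p, a p * Complex.exp (μ p * t) := by
    intro t
    rw [hf]
    push_cast
    rw [Fintype.sum_prod_type]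
    refine Finset.sum_congr rfl fun i _ => ?_
    have hzr : ∀ i : Fin g, (starRingEnd ℂ)
        ((G.mulVec ((NormedSpace.exp (t • Ab)).mulVec x0) i : ℝ) : ℂ)
        = ((G.mulVec ((NormedSpace.exp (t • Ab)).mulVec x0) i : ℝ) : ℂ) :=
      fun i => Complex.conj_ofReal _
    have : ((G.mulVec ((NormedSpace.exp (t • Ab)).mulVec x0) i : ℝ) : ℂ) ^ 2
        = (∑ j, M i j * Complex.exp (d j * t) * c j)
          * (starRingEnd ℂ) (∑ j, M i j * Complex.exp (d j * t) * c j) := by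
      rw [← hz t i, hzr i, sq]
    rw [this, map_sum, Finset.sum_mul_sum]
    rw [Fintype.sum_prod_type]
    refine Finset.sum_congr rfl fun j _ => ?_
    refine Finset.sum_congr rfl fun k _ => ?_
    simp only [ha, hμdef, _root_.map_mul]
    have hconjd : (starRingEnd ℂ) (d k) = - d k := by
      apply Complex.ext <;> simp [hre k]
    have hce : (starRingEnd ℂ) (Complex.exp (d k * t)) = Complex.exp (-(d k) * t) := by
      rw [← Complex.exp_conj, _root_.map_mul, hconjd, Complex.conj_ofReal]
    rw [hce]
    have : Complex.exp ((d j - d k) * t) = Complex.exp (d j * t) * Complex.exp (-(d k) * t) := by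
      rw [← Complex.exp_add]; ring_nf
    rw [this]
    ring
  -- averages
  set Lc : ℂ := ∑ p, a p * (if μ p = 0 then 1 else 0) with hLc
  have hint : ∀ (p : Fin g × Fin nb × Fin nb) (T : ℝ),
      IntervalIntegrable (fun t : ℝ => a p * Complex.exp (μ p * t)) MeasureTheory.volume 0 T := by
    intro p T
    exact (continuous_const.mul (Complex.continuous_exp.comp
      (continuous_const.mul Complex.continuous_ofReal))).intervalIntegrable 0 T
  have havg : ∀ T : ℝ, ((1 / T * ∫ t in (0:ℝ)..T, f t : ℝ) : ℂ)
      = ∑ p, a p * ((1 / (T:ℂ)) * ∫ t in (0:ℝ)..T, Complex.exp (μ p * t)) := by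
    intro T
    rw [Complex.ofReal_mul, ← intervalIntegral.integral_ofReal]
    rw [intervalIntegral.integral_congr (g := fun t => ∑ p, a p * Complex.exp (μ p * t))
      (fun t _ => hkey t)]
    rw [intervalIntegral.integral_finset_sum (fun p _ => hint p T)]
    rw [Finset.mul_sum]
    refine Finset.sum_congr rfl fun p _ => ?_
    rw [Complex.ofReal_div, Complex.ofReal_one, intervalIntegral.integral_const_mul]
    ring
  have hF : Tendsto (fun T : ℝ => ∑ p, a p * ((1 / (T:ℂ)) * ∫ t in (0:ℝ)..T,
      Complex.exp (μ p * t))) atTop (nhds Lc) := by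
    rw [hLc]
    apply tendsto_finset_sum
    intro p _
    exact (avg_cexp (μ p) (by simp [hμdef, Complex.sub_re, hre])).const_mul (a p)
  have hAtend : Tendsto (fun T : ℝ => 1 / T * ∫ t in (0:ℝ)..T, f t) atTop (nhds Lc.re) := by
    have := (Complex.continuous_re.tendsto Lc).comp hF
    apply this.congr
    intro T
    simp only [Function.comp_apply]
    rw [← havg T, Complex.ofReal_re]
  -- identify the limit
  set u : Fin g → ℂ → ℂ := fun i lam => ∑ j ∈ Finset.univ.filter (fun j => d j = lam),
    M i j * c j with hudef
  have hLgroup : Lc = ∑ i, ∑ lam ∈ Finset.univ.image d,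
      (u i lam * (starRingEnd ℂ) (u i lam)) := by
    rw [hLc, Fintype.sum_prod_type]
    refine Finset.sum_congr rfl fun i _ => ?_
    rw [Fintype.sum_prod_type, ← group_sum d (fun j => M i j * c j)]
    refine Finset.sum_congr rfl fun j _ => ?_
    refine Finset.sum_congr rfl fun k _ => ?_
    simp only [ha, hμdef, sub_eq_zero]
    by_cases h : d j = d k <;> simp [h]
  set N : ℝ := ∑ i, ∑ lam ∈ Finset.univ.image d, Complex.normSq (u i lam) with hNdef
  have hLcN : Lc = (N : ℂ) := by
    rw [hLgroup, hNdef]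
    push_cast
    refine Finset.sum_congr rfl fun i _ => Finset.sum_congr rfl fun lam _ => ?_
    rw [Complex.mul_conj]
  have hN0 : 0 ≤ N := by
    rw [hNdef]
    exact Finset.sum_nonneg fun i _ => Finset.sum_nonneg fun lam _ => Complex.normSq_nonneg _
  have hNne : N ≠ 0 := by
    intro hN
    have h1 : ∀ i ∈ (Finset.univ : Finset (Fin g)),
        ∑ lam ∈ Finset.univ.image d, Complex.normSq (u i lam) = 0 :=
      (Finset.sum_eq_zero_iff_of_nonneg
        (fun i _ => Finset.sum_nonneg fun lam _ => Complex.normSq_nonneg _)).mp (hNdef ▸ hN)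
    have hu0 : ∀ (i : Fin g) (lam : ℂ), lam ∈ Finset.univ.image d → u i lam = 0 := by
      intro i lam hlam
      have := (Finset.sum_eq_zero_iff_of_nonneg
        (fun lam _ => Complex.normSq_nonneg _)).mp (h1 i (Finset.mem_univ i)) lam hlam
      exact Complex.normSq_eq_zero.mp this
    have hc0 : ∀ j0 : Fin nb, c j0 = 0 := by
      intro j0
      set lam := d j0 with hlam
      set cl : Fin nb → ℂ := fun j => if d j = lam then c j else 0 with hcl
      have hDc : (Matrix.diagonal d).mulVec cl = lam • cl := by
        funext j
        rw [Matrix.mulVec_diagonal]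
        by_cases h : d j = lam <;> simp [hcl, h, smul_eq_mul]
      have h1' : Ac.mulVec (P.mulVec cl) = lam • P.mulVec cl := by
        rw [Matrix.mulVec_mulVec, hA]
        have hq : P * Matrix.diagonal d * P⁻¹ * P = P * Matrix.diagonal d := by
          rw [Matrix.mul_assoc, Matrix.nonsing_inv_mul P hPdet, Matrix.mul_one]
        rw [hq, ← Matrix.mulVec_mulVec, hDc, Matrix.mulVec_smul]
      have h2' : Gc.mulVec (P.mulVec cl) = 0 := by
        rw [Matrix.mulVec_mulVec, ← hM]
        funext i
        have hmc : M.mulVec cl i = ∑ j ∈ Finset.univ.filter (fun j => d j = lam),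
            M i j * c j := by
          simp only [Matrix.mulVec, dotProduct, hcl, mul_ite, mul_zero]
          exact (Finset.sum_filter _ _).symm
        rw [hmc]
        have : (∑ j ∈ Finset.univ.filter (fun j => d j = lam), M i j * c j) = u i lam :=
          rfl
        rw [this, hu0 i lam (hlam ▸ Finset.mem_image_of_mem d (Finset.mem_univ j0))]
        rfl
      have h3 := hobs lam _ h1' h2'
      have h4 : cl = 0 := by
        apply Matrix.mulVec_injective_iff_isUnit.mpr hP
        rw [h3, Matrix.mulVec_zero]
      have := congrFun h4 j0
      simpa [hcl, hlam] using this
    have hcc : c = 0 := funext hc0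
    have hx0c0 : x0c = 0 := by
      have hid : P.mulVec c = x0c := by
        rw [hc, Matrix.mulVec_mulVec, Matrix.mul_nonsing_inv P hPdet, Matrix.one_mulVec]
      rw [← hid, hcc, Matrix.mulVec_zero]
    apply hx0
    funext j
    have := congrFun hx0c0 j
    rw [hx0c] at this
    simp only [Pi.zero_apply] at this ⊢
    exact_mod_cast this
  refine ⟨N, lt_of_le_of_ne hN0 (Ne.symm hNne), ?_⟩
  have : Lc.re = N := by rw [hLcN, Complex.ofReal_re]
  exact this ▸ hAtend
end

section
/- Let A ∈ ℝ^{n×n}, B ∈ ℝ^{n×m}, C ∈ ℝ^{p×n}, E_d ∈ ℝ^{n×n̄}, D_d ∈ ℝ^{p×n̄}, C̄ ∈ ℝ^{p×n̄}, Ā ∈ ℝ^{n̄×n̄}, and R ∈ ℝ^{m×m} symmetric positive definite. Suppose all eigenvalues of Ā are purely imaginary and Ā is diagonalizable. Then there exist matrices Π ∈ ℝ^{n×n̄}, Γ ∈ ℝ^{m×n̄} solving the classical regulator equations Π Ā = A Π + B Γ + E_d and C̄ = C Π + D_d if and only if there exist matrices Πᵘ ∈ ℝ^{n×n̄}, Λᵘ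 ∈ ℝ^{n×n̄}, Γ̄ᵘ ∈ ℝ^{p×n̄} solving the new regulator equations Λᵘ Ā = −Aᵀ Λᵘ + Cᵀ Γ̄ᵘ, Πᵘ Ā = A Πᵘ − B R⁻¹ Bᵀ Λᵘ + E_d, and C̄ = C Πᵘ + D_d. -/
open Matrix Complex

noncomputable section

/-- conjTranspose of a real-entried complex matrix is the mapped transpose. -/
lemma ctc {a b : Type*} (M : Matrix a b ℝ) :
    (M.map Complex.ofReal)ᴴ = Mᵀ.map Complex.ofReal := by
  ext i j
  simp [conjTranspose_apply, Matrix.map_apply, Complex.conj_ofReal]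

lemma star_imaginary {d : ℂ} (hd : d.re = 0) : star d = -d := by
  apply Complex.ext <;> simp [hd]

lemma posdef_complex {k : ℕ} {Q : Matrix (Fin k) (Fin k) ℝ} (hQ : Q.PosDef)
    (y : Fin k → ℂ) (h : star y ⬝ᵥ (Q.map Complex.ofReal *ᵥ y) = 0) : y = 0 := by
  set a : Fin k → ℝ := fun i => (y i).re with ha
  set b : Fin k → ℝ := fun i => (y i).im with hb
  have key : (star y ⬝ᵥ (Q.map Complex.ofReal *ᵥ y)).re
      = a ⬝ᵥ (Q *ᵥ a) + b ⬝ᵥ (Q *ᵥ b) := by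
    simp only [dotProduct, mulVec, Pi.star_apply]
    rw [Complex.re_sum, ← Finset.sum_add_distrib]
    refine Finset.sum_congr rfl fun i _ => ?_
    rw [Complex.mul_re, Complex.re_sum, Complex.im_sum]
    simp only [Matrix.map_apply, Complex.mul_re, Complex.mul_im, Complex.ofReal_re,
      Complex.ofReal_im, RCLike.star_def, Complex.conj_re, Complex.conj_im,
      zero_mul, sub_zero, zero_add, mul_zero]
    ring_nf
    rfl
  have h0 := congrArg Complex.re h
  rw [key, Complex.zero_re] at h0
  have hQa : 0 ≤ a ⬝ᵥ (Q *ᵥ a) := by simpa using (Matrix.posSemidef_iff_dotProduct_mulVec.mp hQ.posSemidef).2 a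
  have hQb : 0 ≤ b ⬝ᵥ (Q *ᵥ b) := by simpa using (Matrix.posSemidef_iff_dotProduct_mulVec.mp hQ.posSemidef).2 b
  have haz : a = 0 := by
    by_contra hne
    have := (Matrix.posDef_iff_dotProduct_mulVec.mp hQ).2 hne
    simp only [star_trivial] at this
    nlinarith [this]
  have hbz : b = 0 := by
    by_contra hne
    have := (Matrix.posDef_iff_dotProduct_mulVec.mp hQ).2 hne
    simp only [star_trivial] at this
    nlinarith [this]
  funext i
  have h1 : a i = 0 := congrFun haz i
  have h2 : b i = 0 := congrFun hbz i
  exact Complex.ext (by simpa using h1) (by simpa using h2)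


lemma fredholm {ι κ : Type*} [Fintype ι] [Fintype κ] [DecidableEq κ] [DecidableEq ι]
    (M : Matrix ι κ ℂ) (b : ι → ℂ)
    (h : ∀ u : ι → ℂ, Mᴴ.mulVec u = 0 → star u ⬝ᵥ b = 0) :
    ∃ x : κ → ℂ, M.mulVec x = b := by
  classical
  set f := Matrix.toEuclideanLin M with hf
  have hrng : (LinearMap.range f)ᗮ = LinearMap.ker (LinearMap.adjoint f) := by
    ext u
    simp only [Submodule.mem_orthogonal, LinearMap.mem_range, LinearMap.mem_ker,
      forall_exists_index]
    constructor
    · intro hu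
      have h2 : inner ℂ (LinearMap.adjoint f u) (LinearMap.adjoint f u) = (0:ℂ) := by
        rw [LinearMap.adjoint_inner_left, ← inner_conj_symm, hu _ _ rfl, map_zero]
      exact inner_self_eq_zero.mp h2
    · intro hu v x hx
      rw [← hx, ← inner_conj_symm, ← LinearMap.adjoint_inner_left, hu,
        inner_zero_left, map_zero]
  have hmem : ((WithLp.equiv 2 (ι → ℂ)).symm b) ∈ LinearMap.range f := by
    rw [← Submodule.orthogonal_orthogonal (LinearMap.range f), hrng]
    intro u hu
    have hu' : Mᴴ.mulVec (WithLp.equiv 2 (ι → ℂ) u) = 0 := by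
      have : LinearMap.adjoint f u = 0 := hu
      rw [hf, ← Matrix.toEuclideanLin_conjTranspose_eq_adjoint] at this
      exact congrArg (WithLp.equiv 2 (κ → ℂ)) this
    have := h _ hu'
    rw [EuclideanSpace.inner_eq_star_dotProduct, dotProduct_comm]
    simpa using this
  obtain ⟨x, hx⟩ := hmem
  exact ⟨WithLp.equiv 2 (κ → ℂ) x, congrArg (WithLp.equiv 2 (ι → ℂ)) hx⟩

lemma dot_shift {a b : Type*} [Fintype a] [Fintype b] (N : Matrix a b ℂ)
    (u : a → ℂ) (w : b → ℂ) :
    star u ⬝ᵥ (N *ᵥ w) = star (Nᴴ *ᵥ u) ⬝ᵥ w := by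
  rw [star_mulVec, dotProduct_mulVec, conjTranspose_conjTranspose]

lemma column_solve {n m p : ℕ} (A : Matrix (Fin n) (Fin n) ℝ) (B : Matrix (Fin n) (Fin m) ℝ)
    (C : Matrix (Fin p) (Fin n) ℝ) (R : Matrix (Fin m) (Fin m) ℝ) (hR : R.PosDef)
    (d : ℂ) (hd : d.re = 0) (e : Fin n → ℂ) (c : Fin p → ℂ)
    (π : Fin n → ℂ) (γ : Fin m → ℂ)
    (h1 : d • π = (A.map Complex.ofReal) *ᵥ π + (B.map Complex.ofReal) *ᵥ γ + e)
    (h2 : (C.map Complex.ofReal) *ᵥ π = c) :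
    ∃ (πu lam : Fin n → ℂ) (gb : Fin p → ℂ),
      d • lam = -((Aᵀ.map Complex.ofReal) *ᵥ lam) + (Cᵀ.map Complex.ofReal) *ᵥ gb ∧
      d • πu = (A.map Complex.ofReal) *ᵥ πu
          - ((B * R⁻¹ * Bᵀ).map Complex.ofReal) *ᵥ lam + e ∧
      (C.map Complex.ofReal) *ᵥ πu = c := by
  classical
  set Ac := A.map Complex.ofReal with hAc
  set Atc := Aᵀ.map Complex.ofReal with hAtc
  set Bc := B.map Complex.ofReal with hBc
  set Btc := Bᵀ.map Complex.ofReal with hBtc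
  set Cc := C.map Complex.ofReal with hCc
  set Ctc := Cᵀ.map Complex.ofReal with hCtc
  set S := (B * R⁻¹ * Bᵀ).map Complex.ofReal with hS
  set Rc := R⁻¹.map Complex.ofReal with hRc
  have hAcH : Acᴴ = Atc := ctc A
  have hCcH : Ccᴴ = Ctc := ctc C
  have hBcH : Bcᴴ = Btc := ctc B
  have hSfac : S = Bc * Rc * Btc := by
    rw [hS, hBc, hRc, hBtc]
    have : ((B * R⁻¹ * Bᵀ).map Complex.ofReal)
        = (B.map Complex.ofReal) * (R⁻¹.map Complex.ofReal) * (Bᵀ.map Complex.ofReal) := by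
      rw [show (Complex.ofReal : ℝ → ℂ) = ⇑(Complex.ofRealHom) from rfl,
        Matrix.map_mul, Matrix.map_mul]
    exact this
  have hSsymm : (B * R⁻¹ * Bᵀ)ᵀ = B * R⁻¹ * Bᵀ := by
    have hRsymm : Rᵀ = R := hR.1
    rw [Matrix.transpose_mul, Matrix.transpose_mul, Matrix.transpose_transpose,
      Matrix.transpose_nonsing_inv, hRsymm, Matrix.mul_assoc]
  have hSH : Sᴴ = S := by rw [ctc, hSsymm]
  have hstard : star d = -d := star_imaginary hd
  have hAtcH : Atcᴴ = Ac := by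
    have := ctc Aᵀ; rwa [Matrix.transpose_transpose] at this
  have hCtcH : Ctcᴴ = Cc := by
    have := ctc Cᵀ; rwa [Matrix.transpose_transpose] at this
  -- the big block matrix
  set K : Matrix (Fin n ⊕ Fin n) (Fin n ⊕ Fin n) ℂ :=
    Matrix.fromBlocks (d • 1 - Ac) S 0 (d • 1 + Atc) with hK
  set L : Matrix (Fin n ⊕ Fin n) (Fin p) ℂ := Matrix.fromRows 0 (-Ctc) with hL
  set Q : Matrix (Fin p) (Fin n ⊕ Fin n) ℂ := Matrix.fromCols Cc 0 with hQ
  set M : Matrix ((Fin n ⊕ Fin n) ⊕ Fin p) ((Fin n ⊕ Fin n) ⊕ Fin p) ℂ :=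
    Matrix.fromBlocks K L Q 0 with hM
  set b : ((Fin n ⊕ Fin n) ⊕ Fin p) → ℂ := Sum.elim (Sum.elim e 0) c with hb
  obtain ⟨x, hx⟩ : ∃ x, M *ᵥ x = b := by
    apply fredholm
    intro u hu
    set u₁ : Fin n → ℂ := fun i => u (.inl (.inl i)) with hu₁
    set u₂ : Fin n → ℂ := fun i => u (.inl (.inr i)) with hu₂
    set u₃ : Fin p → ℂ := fun i => u (.inr i) with hu₃
    have husum : u = Sum.elim (Sum.elim u₁ u₂) u₃ := by
      funext i; rcases i with (i | i) | i <;> rfl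
    -- compute Mᴴ
    have hMH : Mᴴ = Matrix.fromBlocks
        (Matrix.fromBlocks (-(d • 1) - Atc) 0 S (-(d • 1) + Ac))
        (Matrix.fromRows Ctc 0)
        (Matrix.fromCols 0 (-Cc)) 0 := by
      rw [hM, Matrix.fromBlocks_conjTranspose, hK, Matrix.fromBlocks_conjTranspose,
        hL, hQ, Matrix.conjTranspose_fromRows_eq_fromCols_conjTranspose,
        Matrix.conjTranspose_fromCols_eq_fromRows_conjTranspose]
      congr 1 <;>
        simp [Matrix.conjTranspose_sub, Matrix.conjTranspose_smul, hAcH, hCcH, hSH, hstard,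
          hAtcH, hCtcH]
    rw [hMH, husum, Matrix.fromBlocks_mulVec, Matrix.fromBlocks_mulVec] at hu
    have hrow1 : (-(d • 1) - Atc) *ᵥ u₁ + 0 *ᵥ u₂ + Ctc *ᵥ u₃ = 0 := by
      have := congrFun hu
      funext i
      simpa using congrFun hu (.inl (.inl i))
    have hrow2 : S *ᵥ u₁ + (-(d • 1) + Ac) *ᵥ u₂ + 0 *ᵥ u₃ = 0 := by
      funext i
      simpa using congrFun hu (.inl (.inr i))
    have hrow3 : (0 : Matrix (Fin p) (Fin n) ℂ) *ᵥ u₁ + (-Cc) *ᵥ u₂ + 0 *ᵥ u₃ = 0 := by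
      funext i
      simpa using congrFun hu (.inr i)
    -- clean forms
    have E1 : Atc *ᵥ u₁ = Ctc *ᵥ u₃ - d • u₁ := by
      have := hrow1
      rw [Matrix.zero_mulVec, add_zero, Matrix.sub_mulVec] at this
      have h1 : (-(d • 1) : Matrix (Fin n) (Fin n) ℂ) *ᵥ u₁ = -(d • u₁) := by
        rw [Matrix.neg_mulVec, Matrix.smul_mulVec, Matrix.one_mulVec]
      rw [h1] at this
      linear_combination (norm := module) -this
    have E2 : S *ᵥ u₁ = d • u₂ - Ac *ᵥ u₂ := by
      have := hrow2
      rw [Matrix.zero_mulVec, add_zero, Matrix.add_mulVec] at this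
      have h1 : (-(d • 1) : Matrix (Fin n) (Fin n) ℂ) *ᵥ u₂ = -(d • u₂) := by
        rw [Matrix.neg_mulVec, Matrix.smul_mulVec, Matrix.one_mulVec]
      rw [h1] at this
      linear_combination (norm := module) this
    have E3 : Cc *ᵥ u₂ = 0 := by
      have := hrow3
      rw [Matrix.zero_mulVec, Matrix.zero_mulVec, add_zero, zero_add,
        Matrix.neg_mulVec, neg_eq_zero] at this
      exact this
    -- key: Bᵀ u₁ = 0
    have hCshift : ∀ w : Fin n → ℂ, star (Ctc *ᵥ u₃) ⬝ᵥ w = star u₃ ⬝ᵥ (Cc *ᵥ w) := by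
      intro w
      have := dot_shift Cc u₃ w
      rw [hCcH] at this
      exact this.symm
    have hy : Btc *ᵥ u₁ = 0 := by
      apply posdef_complex hR.inv
      have step1 : star u₁ ⬝ᵥ (S *ᵥ u₁) = star (Btc *ᵥ u₁) ⬝ᵥ (Rc *ᵥ (Btc *ᵥ u₁)) := by
        rw [hSfac, ← Matrix.mulVec_mulVec, ← Matrix.mulVec_mulVec, dot_shift, hBcH]
      have step2 : star u₁ ⬝ᵥ (S *ᵥ u₁) = 0 := by
        rw [E2, dotProduct_sub, dotProduct_smul, dot_shift, hAcH, E1, star_sub,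
          sub_dotProduct, hCshift u₂, E3, dotProduct_zero, star_smul, hstard,
          smul_dotProduct]
        simp
      rw [← step1, step2]
    -- conclude orthogonality
    rw [husum, hb]
    have hsplit : star (Sum.elim (Sum.elim u₁ u₂) u₃) ⬝ᵥ Sum.elim (Sum.elim e 0) c
        = star u₁ ⬝ᵥ e + star u₃ ⬝ᵥ c := by
      rw [Function.star_sumElim, Function.star_sumElim,
        sumElim_dotProduct_sumElim, sumElim_dotProduct_sumElim]
      simp
    rw [hsplit]
    have he : e = d • π - Ac *ᵥ π - Bc *ᵥ γ := by
      rw [h1]; module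
    rw [he, dotProduct_sub, dotProduct_sub, dotProduct_smul, dot_shift, hAcH, E1,
      star_sub, sub_dotProduct, hCshift π, h2, star_smul, hstard,
      smul_dotProduct, dot_shift, hBcH, hy]
    simp only [star_zero, zero_dotProduct, smul_eq_mul, neg_mul, sub_neg_eq_add, sub_zero]
    ring
  -- extract solution
  set πu : Fin n → ℂ := fun i => x (.inl (.inl i)) with hπu
  set lam : Fin n → ℂ := fun i => x (.inl (.inr i)) with hlam
  set gb : Fin p → ℂ := fun i => x (.inr i) with hgb
  have hxsum : x = Sum.elim (Sum.elim πu lam) gb := by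
    funext i; rcases i with (i | i) | i <;> rfl
  rw [hxsum, hM, hK, hL, hQ, Matrix.fromBlocks_mulVec, Matrix.fromBlocks_mulVec, hb] at hx
  have grow1 : (d • 1 - Ac) *ᵥ πu + S *ᵥ lam = e := by
    funext i
    simpa using congrFun hx (.inl (.inl i))
  have grow2 : (d • 1 + Atc) *ᵥ lam + (-Ctc) *ᵥ gb = 0 := by
    funext i
    simpa using congrFun hx (.inl (.inr i))
  have grow3 : Cc *ᵥ πu = c := by
    funext i
    simpa using congrFun hx (.inr i)
  refine ⟨πu, lam, gb, ?_, ?_, grow3⟩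
  · rw [Matrix.add_mulVec, Matrix.smul_mulVec, Matrix.one_mulVec,
      Matrix.neg_mulVec] at grow2
    linear_combination (norm := module) grow2
  · rw [Matrix.sub_mulVec, Matrix.smul_mulVec, Matrix.one_mulVec] at grow1
    linear_combination (norm := module) grow1

lemma cmap_mul {a b c : Type*} [Fintype b] (X : Matrix a b ℝ) (Y : Matrix b c ℝ) :
    (X * Y).map Complex.ofReal = X.map Complex.ofReal * Y.map Complex.ofReal := by
  ext i j
  simp only [Matrix.map_apply, Matrix.mul_apply]
  push_cast
  rfl

lemma cmap_add {a b : Type*} (X Y : Matrix a b ℝ) :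
    (X + Y).map Complex.ofReal = X.map Complex.ofReal + Y.map Complex.ofReal := by
  ext i j; simp

lemma cmap_sub {a b : Type*} (X Y : Matrix a b ℝ) :
    (X - Y).map Complex.ofReal = X.map Complex.ofReal - Y.map Complex.ofReal := by
  ext i j; simp

/-- entrywise real part of a complex matrix -/
def matRe {a b : Type*} (X : Matrix a b ℂ) : Matrix a b ℝ := Matrix.of fun i j => (X i j).re

lemma matRe_mul_right {a b c : Type*} [Fintype b] (X : Matrix a b ℂ) (M : Matrix b c ℝ) :
    matRe (X * M.map Complex.ofReal) = matRe X * M := by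
  ext i j
  simp only [matRe, Matrix.of_apply, Matrix.mul_apply, Matrix.map_apply]
  rw [Complex.re_sum]
  exact Finset.sum_congr rfl fun k _ => by simp [Complex.mul_re]

lemma matRe_mul_left {a b c : Type*} [Fintype b] (M : Matrix a b ℝ) (X : Matrix b c ℂ) :
    matRe (M.map Complex.ofReal * X) = M * matRe X := by
  ext i j
  simp only [matRe, Matrix.of_apply, Matrix.mul_apply, Matrix.map_apply]
  rw [Complex.re_sum]
  exact Finset.sum_congr rfl fun k _ => by simp [Complex.mul_re]

lemma matRe_add {a b : Type*} (X Y : Matrix a b ℂ) : matRe (X + Y) = matRe X + matRe Y := by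
  ext i j; simp [matRe]

lemma matRe_sub {a b : Type*} (X Y : Matrix a b ℂ) : matRe (X - Y) = matRe X - matRe Y := by
  ext i j; simp [matRe]

lemma matRe_neg {a b : Type*} (X : Matrix a b ℂ) : matRe (-X) = -matRe X := by
  ext i j; simp [matRe]

lemma matRe_ofReal {a b : Type*} (M : Matrix a b ℝ) : matRe (M.map Complex.ofReal) = M := by
  ext i j; simp [matRe]

/-- Lemma 2 of the paper: the classical regulator equations `RG` are solvable iff the new
regulator equations `RG^u` are solvable. -/
theorem stmt8 {n m p nb : ℕ} (A : Matrix (Fin n) (Fin n) ℝ) (B : Matrix (Fin n) (Fin m) ℝ)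
    (C : Matrix (Fin p) (Fin n) ℝ) (Ed : Matrix (Fin n) (Fin nb) ℝ)
    (Dd Cb : Matrix (Fin p) (Fin nb) ℝ) (Ab : Matrix (Fin nb) (Fin nb) ℝ)
    (R : Matrix (Fin m) (Fin m) ℝ) (hR : R.PosDef)
    (hdiag : ∃ (P : Matrix (Fin nb) (Fin nb) ℂ) (d : Fin nb → ℂ),
      IsUnit P ∧ (∀ i, (d i).re = 0) ∧
        Ab.map Complex.ofReal = P * Matrix.diagonal d * P⁻¹) :
    (∃ (Pi' : Matrix (Fin n) (Fin nb) ℝ) (Γ : Matrix (Fin m) (Fin nb) ℝ),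
        Pi' * Ab = A * Pi' + B * Γ + Ed ∧ Cb = C * Pi' + Dd) ↔
    (∃ (Piu Λu : Matrix (Fin n) (Fin nb) ℝ) (Γbu : Matrix (Fin p) (Fin nb) ℝ),
        Λu * Ab = -Aᵀ * Λu + Cᵀ * Γbu ∧
        Piu * Ab = A * Piu - B * R⁻¹ * Bᵀ * Λu + Ed ∧
        Cb = C * Piu + Dd) := by
  constructor
  · rintro ⟨Pi0, Γ0, hp1, hp2⟩
    obtain ⟨P, dv, hP, hdv, hAb⟩ := hdiag
    have hdet := (Matrix.isUnit_iff_isUnit_det P).mp hP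
    have hPP : P * P⁻¹ = 1 := Matrix.mul_nonsing_inv P hdet
    have hPP' : P⁻¹ * P = 1 := Matrix.nonsing_inv_mul P hdet
    have hAbP : (Ab.map Complex.ofReal) * P = P * Matrix.diagonal dv := by
      rw [hAb, Matrix.mul_assoc, hPP', Matrix.mul_one]
    have hPAb : P⁻¹ * (Ab.map Complex.ofReal) = Matrix.diagonal dv * P⁻¹ := by
      rw [hAb, ← Matrix.mul_assoc, ← Matrix.mul_assoc, hPP', Matrix.one_mul]
    set Ac := A.map Complex.ofReal
    set Bc := B.map Complex.ofReal
    set Cc := C.map Complex.ofReal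
    set Atc := Aᵀ.map Complex.ofReal
    set Ctc := Cᵀ.map Complex.ofReal
    set Sc := (B * R⁻¹ * Bᵀ).map Complex.ofReal
    set Pi1 := (Pi0.map Complex.ofReal) * P with hPi1
    set Γ₁ := (Γ0.map Complex.ofReal) * P with hΓ₁
    set E₁ := (Ed.map Complex.ofReal) * P with hE₁
    set Cb₁ := (Cb.map Complex.ofReal - Dd.map Complex.ofReal) * P with hCb₁
    have hc1 : Pi1 * Matrix.diagonal dv = Ac * Pi1 + Bc * Γ₁ + E₁ := by
      have h := congrArg (fun X => (X.map Complex.ofReal) * P) hp1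
      simp only [cmap_mul, cmap_add] at h
      calc Pi1 * Matrix.diagonal dv
          = Pi0.map Complex.ofReal * (Ab.map Complex.ofReal * P) := by
            rw [hAbP, hPi1, Matrix.mul_assoc]
        _ = (A.map Complex.ofReal * Pi0.map Complex.ofReal
              + B.map Complex.ofReal * Γ0.map Complex.ofReal + Ed.map Complex.ofReal) * P := by
            rw [← Matrix.mul_assoc, h]
        _ = Ac * Pi1 + Bc * Γ₁ + E₁ := by
            rw [Matrix.add_mul, Matrix.add_mul, hPi1, hΓ₁, hE₁, Matrix.mul_assoc,
              Matrix.mul_assoc]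
    have hc2 : Cc * Pi1 = Cb₁ := by
      have h : C * Pi0 = Cb - Dd := by rw [hp2]; abel
      have h' := congrArg (fun X => (X.map Complex.ofReal) * P) h
      simp only [cmap_mul, cmap_sub] at h'
      rw [hPi1, ← Matrix.mul_assoc, h', hCb₁]
    have h1col : ∀ k, dv k • (fun i => Pi1 i k) =
        Ac *ᵥ (fun i => Pi1 i k) + Bc *ᵥ (fun i => Γ₁ i k) + (fun i => E₁ i k) := by
      intro k
      funext i
      have h := congrFun (congrFun hc1 i) k
      rw [Matrix.mul_diagonal, mul_comm] at h
      exact h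
    have h2col : ∀ k, Cc *ᵥ (fun i => Pi1 i k) = (fun i => Cb₁ i k) := by
      intro k
      funext i
      exact congrFun (congrFun hc2 i) k
    choose pu la gb heq1 heq2 heq3 using fun k : Fin nb =>
      column_solve A B C R hR (dv k) (hdv k) (fun i => E₁ i k) (fun i => Cb₁ i k)
        (fun i => Pi1 i k) (fun i => Γ₁ i k) (h1col k) (h2col k)
    set Pu1 : Matrix (Fin n) (Fin nb) ℂ := Matrix.of fun i k => pu k i with hPu1
    set Λ₁ : Matrix (Fin n) (Fin nb) ℂ := Matrix.of fun i k => la k i with hΛ₁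
    set Gb₁ : Matrix (Fin p) (Fin nb) ℂ := Matrix.of fun i k => gb k i with hGb₁
    have M1 : Λ₁ * Matrix.diagonal dv = -(Atc * Λ₁) + Ctc * Gb₁ := by
      ext i k
      rw [Matrix.mul_diagonal]
      rw [mul_comm]
      exact congrFun (heq1 k) i
    have M2 : Pu1 * Matrix.diagonal dv = Ac * Pu1 - Sc * Λ₁ + E₁ := by
      ext i k
      rw [Matrix.mul_diagonal]
      rw [mul_comm]
      exact congrFun (heq2 k) i
    have M3 : Cc * Pu1 = Cb₁ := by
      ext i k
      exact congrFun (heq3 k) i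
    set Puc := Pu1 * P⁻¹ with hPuc
    set Λc := Λ₁ * P⁻¹ with hΛc
    set Γbc := Gb₁ * P⁻¹ with hΓbc
    have G1 : Λc * (Ab.map Complex.ofReal) = -(Atc * Λc) + Ctc * Γbc := by
      rw [hΛc, Matrix.mul_assoc, hPAb, ← Matrix.mul_assoc, M1, Matrix.add_mul,
        Matrix.neg_mul, Matrix.mul_assoc, Matrix.mul_assoc]
    have G2 : Puc * (Ab.map Complex.ofReal) = Ac * Puc - Sc * Λc + Ed.map Complex.ofReal := by
      rw [hPuc, Matrix.mul_assoc, hPAb, ← Matrix.mul_assoc, M2, Matrix.add_mul,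
        Matrix.sub_mul, hE₁, Matrix.mul_assoc, Matrix.mul_assoc, Matrix.mul_assoc, hPP,
        Matrix.mul_one]
    have G3 : Cc * Puc = Cb.map Complex.ofReal - Dd.map Complex.ofReal := by
      rw [hPuc, ← Matrix.mul_assoc, M3, hCb₁, Matrix.mul_assoc, hPP, Matrix.mul_one]
    refine ⟨matRe Puc, matRe Λc, matRe Γbc, ?_, ?_, ?_⟩
    · have := congrArg matRe G1
      rw [matRe_mul_right, matRe_add, matRe_neg, matRe_mul_left, matRe_mul_left] at this
      rw [this, Matrix.neg_mul]
    · have := congrArg matRe G2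
      rw [matRe_mul_right, matRe_add, matRe_sub, matRe_mul_left, matRe_mul_left,
        matRe_ofReal] at this
      rw [this]
    · have := congrArg matRe G3
      rw [matRe_mul_left, matRe_sub, matRe_ofReal, matRe_ofReal] at this
      rw [this]
      abel
  · rintro ⟨Piu, Λu, Γbu, h1, h2, h3⟩
    refine ⟨Piu, -(R⁻¹ * Bᵀ * Λu), ?_, h3⟩
    rw [h2, Matrix.mul_neg, ← Matrix.mul_assoc, ← Matrix.mul_assoc, sub_eq_add_neg]
end
end

section
/- Let Ā ∈ ℝ^{n̄×n̄} be diagonal with purely imaginary diagonal entries and let M ∈ ℝ^{g×n̄}. If x̄(t) = e^{Āt} x̄₀ and (R_{1/2} M, Ā) fails condition rank: suppose after an observability decomposition Ā = diag(Ā₁₁, Ā₂₂) and M = [M₁, 0] with (M₁, Ā₁₁) completely observable, and x̄₀ = (x̄₁(0), x̄₂(0)). Then lim_{T→∞} (1/T)∫₀^T x̄(t)ᵀ Mᵀ M x̄(t) dt > 0 if and only if x̄₁(0) ≠ 0. -/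
open Matrix Filter MeasureTheory intervalIntegral Finset
open scoped ComplexConjugate

lemma avg_exp_tendsto (c : ℂ) (hc : c.re = 0) :
    Filter.Tendsto (fun T : ℝ => (1/(T:ℂ)) * ∫ t in (0:ℝ)..T, Complex.exp (c * t))
      Filter.atTop (nhds (if c = 0 then 1 else 0)) := by
  by_cases h : c = 0
  · simp only [h, if_pos rfl]
    apply Filter.Tendsto.congr' _ (tendsto_const_nhds (x := (1:ℂ)))
    filter_upwards [eventually_gt_atTop (0:ℝ)] with T hT
    simp only [zero_mul, Complex.exp_zero]
    rw [intervalIntegral.integral_const]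
    simp only [sub_zero, smul_eq_mul, Complex.real_smul, mul_one, one_div]
    have : (T:ℂ) ≠ 0 := by exact_mod_cast hT.ne'
    field_simp
  · simp only [if_neg h]
    have key : ∀ T : ℝ, (1/(T:ℂ)) * ∫ t in (0:ℝ)..T, Complex.exp (c * t)
        = (1/(T:ℂ)) * ((Complex.exp (c * T) - 1)/c) := by
      intro T
      rw [integral_exp_mul_complex h]
      norm_num
    simp only [key]
    apply squeeze_zero_norm' (a := fun T : ℝ => (2/‖c‖)/T)
    · filter_upwards [eventually_gt_atTop (0:ℝ)] with T hT
      have h1 : ‖Complex.exp (c * T) - 1‖ ≤ 2 := by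
        calc ‖Complex.exp (c * T) - 1‖ ≤ ‖Complex.exp (c * T)‖ + ‖(1:ℂ)‖ := norm_sub_le _ _
        _ ≤ 2 := by
          rw [Complex.norm_exp]
          have : (c * T).re = 0 := by simp [Complex.mul_re, hc]
          rw [this]; norm_num
      have hcn : 0 < ‖c‖ := norm_pos_iff.mpr h
      rw [norm_mul, norm_div, norm_div, norm_one]
      have hTn : ‖(T:ℂ)‖ = T := by
        rw [Complex.norm_real, Real.norm_of_nonneg hT.le]
      rw [hTn, one_div, inv_mul_le_iff₀ hT]
      have h2 : T * (2/‖c‖/T) = 2/‖c‖ := by rw [mul_comm, div_mul_cancel₀ _ hT.ne']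
      rw [h2]
      gcongr
    · exact Filter.Tendsto.div_atTop tendsto_const_nhds tendsto_id

lemma avg_sum_exp {ι : Type*} [Fintype ι] (c : ι → ℂ) (hc : ∀ i, (c i).re = 0) (w : ι → ℂ) :
    Filter.Tendsto (fun T : ℝ =>
        (1/(T:ℂ)) * ∫ t in (0:ℝ)..T, ∑ i, w i * Complex.exp (c i * t))
      Filter.atTop (nhds (∑ i, w i * (if c i = 0 then 1 else 0))) := by
  have hexpc : ∀ a : ℂ, Continuous (fun t : ℝ => Complex.exp (a * t)) :=
    fun a => Complex.continuous_exp.comp (continuous_const.mul Complex.continuous_ofReal)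
  have key : ∀ T : ℝ, (1/(T:ℂ)) * ∫ t in (0:ℝ)..T, ∑ i, w i * Complex.exp (c i * t)
      = ∑ i, w i * ((1/(T:ℂ)) * ∫ t in (0:ℝ)..T, Complex.exp (c i * t)) := by
    intro T
    rw [intervalIntegral.integral_finset_sum
      (fun i _ => ((hexpc (c i)).intervalIntegrable 0 T).const_mul (w i)), Finset.mul_sum]
    refine Finset.sum_congr rfl fun i _ => ?_
    rw [intervalIntegral.integral_const_mul]
    ring
  simp only [key]
  exact tendsto_finset_sum _ fun i _ => ((avg_exp_tendsto (c i) (hc i)).const_mul (w i))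

lemma avg_sum_exp_re {ι : Type*} [Fintype ι] (c : ι → ℂ) (hc : ∀ i, (c i).re = 0) (w : ι → ℂ) :
    Filter.Tendsto (fun T : ℝ =>
        (1/T) * ∫ t in (0:ℝ)..T, (∑ i, w i * Complex.exp (c i * t)).re)
      Filter.atTop (nhds (∑ i, w i * (if c i = 0 then 1 else 0)).re) := by
  have hexpc : ∀ a : ℂ, Continuous (fun t : ℝ => Complex.exp (a * t)) :=
    fun a => Complex.continuous_exp.comp (continuous_const.mul Complex.continuous_ofReal)
  have hFcont : Continuous (fun t : ℝ => ∑ i, w i * Complex.exp (c i * t)) :=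
    continuous_finset_sum _ fun i _ => continuous_const.mul (hexpc (c i))
  have key : ∀ T : ℝ, ((1/T) * ∫ t in (0:ℝ)..T, (∑ i, w i * Complex.exp (c i * t)).re)
      = ((1/(T:ℂ)) * ∫ t in (0:ℝ)..T, ∑ i, w i * Complex.exp (c i * t)).re := by
    intro T
    have h1 : (∫ t in (0:ℝ)..T, (∑ i, w i * Complex.exp (c i * t)).re)
        = (∫ t in (0:ℝ)..T, ∑ i, w i * Complex.exp (c i * t)).re := by
      rw [show (fun t : ℝ => (∑ i, w i * Complex.exp (c i * t)).re)
          = fun t : ℝ => Complex.reCLM (∑ i, w i * Complex.exp (c i * t)) from rfl,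
        Complex.reCLM.intervalIntegral_comp_comm (hFcont.intervalIntegrable 0 T)]
      rfl
    rw [h1, ← Complex.re_ofReal_mul]
    congr 2
    push_cast
    ring
  simp only [key]
  exact (Complex.continuous_re.tendsto _).comp (avg_sum_exp c hc w)

lemma norm_sq_sum_exp {n1 : ℕ} (d1 : Fin n1 → ℂ) (hd1 : ∀ i, (d1 i).re = 0)
    (b : Fin n1 → ℂ) (t : ℝ) :
    ‖∑ j, b j * Complex.exp (d1 j * t)‖ ^ 2
    = (∑ j, ∑ k, (b j * conj (b k)) * Complex.exp ((d1 j - d1 k) * t)).re := by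
  have hns : ∀ z : ℂ, ‖z‖^2 = (z * conj z).re := by
    intro z; rw [Complex.mul_conj]
    simp [Complex.normSq_eq_norm_sq, ← Complex.ofReal_pow]
  rw [hns]
  congr 1
  rw [_root_.map_sum, Finset.sum_mul_sum]
  refine Finset.sum_congr rfl fun j _ => Finset.sum_congr rfl fun k _ => ?_
  rw [_root_.map_mul]
  have hconj : conj (Complex.exp (d1 k * t)) = Complex.exp (-(d1 k) * t) := by
    rw [← Complex.exp_conj, _root_.map_mul, Complex.conj_ofReal]
    congr 1
    apply Complex.ext <;> simp [hd1 k]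
  rw [hconj, mul_mul_mul_comm, ← Complex.exp_add]
  congr 1
  ring_nf

set_option maxHeartbeats 1000000 in
/-- Lemma A.1 (both cases): after an observability decomposition
`Ā = diag(Ā₁₁, Ā₂₂)`, `M = [M₁, 0]` with `(M₁, Ā₁₁)` completely observable and all diagonal
entries purely imaginary, the average output power is positive iff the observable part
`x̄₁(0)` of the initial condition is nonzero. -/
theorem stmt15 {n1 n2 g : ℕ} (d1 : Fin n1 → ℂ) (d2 : Fin n2 → ℂ)
    (hd1 : ∀ i, (d1 i).re = 0) (hd2 : ∀ i, (d2 i).re = 0)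
    (M1 : Matrix (Fin g) (Fin n1) ℂ)
    (hobs : ∀ (μ : ℂ) (v : Fin n1 → ℂ),
      (Matrix.diagonal d1).mulVec v = μ • v → M1.mulVec v = 0 → v = 0)
    (x1 : Fin n1 → ℂ) (x2 : Fin n2 → ℂ) :
    ∃ L : ℝ,
      Filter.Tendsto
        (fun T : ℝ => (1 / T) *
          ∫ t in (0:ℝ)..T, ∑ i,
            ‖(Matrix.fromCols M1 (0 : Matrix (Fin g) (Fin n2) ℂ)).mulVec
              ((NormedSpace.exp ((t : ℂ) •
                Matrix.fromBlocks (Matrix.diagonal d1) 0 0 (Matrix.diagonal d2))).mulVec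
                (Sum.elim x1 x2)) i‖ ^ 2)
        Filter.atTop (nhds L) ∧
      (0 < L ↔ x1 ≠ 0) := by
  classical
  set b : Fin g → Fin n1 → ℂ := fun i j => M1 i j * x1 j with hb
  set w : Fin g × Fin n1 × Fin n1 → ℂ := fun p => b p.1 p.2.1 * conj (b p.1 p.2.2) with hw
  set c : Fin g × Fin n1 × Fin n1 → ℂ := fun p => d1 p.2.1 - d1 p.2.2 with hc
  have hcre : ∀ p, (c p).re = 0 := by intro p; simp [hc, Complex.sub_re, hd1]
  -- the output components
  have hout : ∀ (t : ℝ) (i : Fin g),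
      (Matrix.fromCols M1 (0 : Matrix (Fin g) (Fin n2) ℂ)).mulVec
        ((NormedSpace.exp ((t : ℂ) •
          Matrix.fromBlocks (Matrix.diagonal d1) 0 0 (Matrix.diagonal d2))).mulVec
          (Sum.elim x1 x2)) i
      = ∑ j, b i j * Complex.exp (d1 j * t) := by
    intro t i
    rw [Matrix.fromBlocks_diagonal, ← Matrix.diagonal_smul, Matrix.exp_diagonal]
    simp only [Matrix.mulVec, dotProduct, Fintype.sum_sum_type,
      Matrix.fromCols_apply_inl, Matrix.fromCols_apply_inr, Matrix.zero_apply, zero_mul,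
      Finset.sum_const_zero, add_zero, Matrix.diagonal_apply, Pi.exp_def]
    refine Finset.sum_congr rfl fun j _ => ?_
    simp [Sum.inl.injEq, Finset.sum_ite_eq, ← Complex.exp_eq_exp_ℂ]
    simp only [hb]; ring
  have hpt : ∀ t : ℝ,
      (∑ i, ‖(Matrix.fromCols M1 (0 : Matrix (Fin g) (Fin n2) ℂ)).mulVec
        ((NormedSpace.exp ((t : ℂ) •
          Matrix.fromBlocks (Matrix.diagonal d1) 0 0 (Matrix.diagonal d2))).mulVec
          (Sum.elim x1 x2)) i‖ ^ 2)
      = (∑ p, w p * Complex.exp (c p * t)).re := by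
    intro t
    rw [Fintype.sum_prod_type, Complex.re_sum]
    refine Finset.sum_congr rfl fun i _ => ?_
    rw [hout t i, norm_sq_sum_exp d1 hd1, Fintype.sum_prod_type, Complex.re_sum]
  refine ⟨(∑ p, w p * (if c p = 0 then 1 else 0)).re, ?_, ?_⟩
  · have heq : (fun T : ℝ => (1 / T) *
        ∫ t in (0:ℝ)..T, ∑ i,
          ‖(Matrix.fromCols M1 (0 : Matrix (Fin g) (Fin n2) ℂ)).mulVec
            ((NormedSpace.exp ((t : ℂ) •
              Matrix.fromBlocks (Matrix.diagonal d1) 0 0 (Matrix.diagonal d2))).mulVec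
              (Sum.elim x1 x2)) i‖ ^ 2)
        = fun T : ℝ => (1/T) * ∫ t in (0:ℝ)..T, (∑ p, w p * Complex.exp (c p * t)).re := by
      funext T
      rw [intervalIntegral.integral_congr (fun t _ => hpt t)]
    rw [heq]
    exact avg_sum_exp_re c hcre w
  · set S : Fin g → ℂ → ℂ := fun i μ => ∑ j ∈ Finset.univ.filter (fun j => d1 j = μ), b i j
      with hS
    have inner : ∀ i j, (∑ k, w (i, j, k) * (if c (i, j, k) = 0 then 1 else 0))
        = b i j * conj (S i (d1 j)) := by
      intro i j
      simp only [hS]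
      rw [Finset.sum_filter, _root_.map_sum, Finset.mul_sum]
      refine Finset.sum_congr rfl fun k _ => ?_
      by_cases h : d1 k = d1 j
      · simp [hw, hc, h, sub_eq_zero]
      · have h' : ¬ (d1 j - d1 k = 0) := by rw [sub_eq_zero]; exact fun hh => h hh.symm
        simp [hw, hc, h, h']
    have hC : (∑ p, w p * (if c p = 0 then 1 else 0))
        = ∑ i, ∑ μ ∈ Finset.univ.image d1, (Complex.normSq (S i μ) : ℂ) := by
      rw [Fintype.sum_prod_type]
      refine Finset.sum_congr rfl fun i _ => ?_
      rw [Fintype.sum_prod_type]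
      simp only [inner]
      rw [← Finset.sum_fiberwise_of_maps_to (g := d1)
        (fun j _ => Finset.mem_image_of_mem d1 (Finset.mem_univ j))
        (fun j => b i j * conj (S i (d1 j)))]
      refine Finset.sum_congr rfl fun μ hμ => ?_
      have hper : ∀ j ∈ Finset.univ.filter (fun j => d1 j = μ),
          b i j * conj (S i (d1 j)) = b i j * conj (S i μ) := by
        intro j hj
        rw [(Finset.mem_filter.mp hj).2]
      rw [Finset.sum_congr rfl hper, ← Finset.sum_mul, ← Complex.mul_conj]
    have hre : (∑ p, w p * (if c p = 0 then 1 else 0)).re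
        = ∑ i, ∑ μ ∈ Finset.univ.image d1, Complex.normSq (S i μ) := by
      rw [hC, Complex.re_sum]
      refine Finset.sum_congr rfl fun i _ => ?_
      rw [Complex.re_sum]
      exact Finset.sum_congr rfl fun μ _ => Complex.ofReal_re _
    have hnonneg : 0 ≤ (∑ p, w p * (if c p = 0 then 1 else 0)).re := by
      rw [hre]
      exact Finset.sum_nonneg fun i _ => Finset.sum_nonneg fun μ _ => Complex.normSq_nonneg _
    constructor
    · intro hpos hx
      rw [hre] at hpos
      have hb0 : ∀ i j, b i j = 0 := by
        intro i j; rw [hb]; simp [show x1 = 0 from hx]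
      have hS0 : ∀ i μ, S i μ = 0 := by
        intro i μ; rw [hS]; exact Finset.sum_eq_zero fun j _ => hb0 i j
      simp [hS0] at hpos
    · intro hx
      rcases lt_or_eq_of_le hnonneg with h | h
      · exact h
      · exfalso
        apply hx
        have hall : ∀ i, ∀ μ ∈ Finset.univ.image d1, Complex.normSq (S i μ) = 0 := by
          intro i μ hμ
          have h1 := (Finset.sum_eq_zero_iff_of_nonneg
            (fun i _ => Finset.sum_nonneg fun μ _ => Complex.normSq_nonneg _)).mp
            (by rw [← hre, ← h])
          have h2 := (Finset.sum_eq_zero_iff_of_nonneg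
            (fun μ _ => Complex.normSq_nonneg _)).mp (h1 i (Finset.mem_univ i))
          exact h2 μ hμ
        funext j0
        set μ0 : ℂ := d1 j0 with hμdef
        set v : Fin n1 → ℂ := fun j => if d1 j = μ0 then x1 j else 0 with hv
        have heig : (Matrix.diagonal d1).mulVec v = μ0 • v := by
          funext j
          rw [Matrix.mulVec_diagonal]
          by_cases h' : d1 j = μ0
          · simp [hv, h', Pi.smul_apply, smul_eq_mul]
          · simp [hv, h']
        have hMv : M1.mulVec v = 0 := by
          funext i
          have hMv1 : M1.mulVec v i = S i μ0 := by
            rw [Matrix.mulVec, dotProduct]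
            simp only [hS]
            rw [Finset.sum_filter]
            refine Finset.sum_congr rfl fun j _ => ?_
            by_cases h' : d1 j = μ0
            · simp [hv, h', hb]
            · simp [hv, h']
          rw [hMv1]
          have := hall i μ0 (Finset.mem_image_of_mem d1 (Finset.mem_univ j0))
          simpa using Complex.normSq_eq_zero.mp this
        have hv0 := hobs μ0 v heig hMv
        have hvj0 : v j0 = x1 j0 := by rw [hv]; simp [hμdef]
        rw [hv0] at hvj0
        simpa using hvj0.symm
end

section
/- Let A = [[0, λI−A₀, B],[−λI−A₀ᵀ, −C₀ᵀQC₀, 0],[−B₀ᵀ, 0, 0]] be the Hamiltonian matrix P_H^y(λ) for real matrices A₀ (n×n), B₀ (n×m), C₀ (p×n), Q symmetric positive definite (p×p), and λ purely imaginary. Suppose ν̂ = (ν_s, ν_{c1}, ν_{c2}) ∈ ℂ^n × ℂ^n × ℂ^m satisfies P_H^y(λ) ν̂ = 0. Then, setting ν̃ = −Q C₀ ν_{c1}, one has ν̃ᴴ Q⁻¹ ν̃ = 0, hence C₀ ν_{c1} = 0. -/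
open Matrix

lemma re_quad {p : ℕ} (Q : Matrix (Fin p) (Fin p) ℝ) (v : Fin p → ℂ) :
    (star v ⬝ᵥ (Q.map Complex.ofReal) *ᵥ v).re =
      (fun i => (v i).re) ⬝ᵥ Q *ᵥ (fun i => (v i).re)
        + (fun i => (v i).im) ⬝ᵥ Q *ᵥ (fun i => (v i).im) := by
  simp only [dotProduct, mulVec, Matrix.map_apply, Pi.star_apply, Finset.mul_sum]
  rw [Complex.re_sum, ← Finset.sum_add_distrib]
  refine Finset.sum_congr rfl fun i _ => ?_
  rw [Complex.re_sum, ← Finset.sum_add_distrib]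
  refine Finset.sum_congr rfl fun j _ => ?_
  simp [Complex.mul_re, Complex.mul_im]

lemma ker_of_quad {p : ℕ} {Q : Matrix (Fin p) (Fin p) ℝ} (hQ : Q.PosDef) (v : Fin p → ℂ)
    (hv : star v ⬝ᵥ (Q.map Complex.ofReal) *ᵥ v = 0) : v = 0 := by
  have hre := re_quad Q v
  rw [hv] at hre
  simp only [Complex.zero_re] at hre
  set a : Fin p → ℝ := fun i => (v i).re with ha
  set b : Fin p → ℝ := fun i => (v i).im with hb
  have h1 : (0:ℝ) ≤ a ⬝ᵥ Q *ᵥ a := by simpa using hQ.posSemidef.dotProduct_mulVec_nonneg a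
  have h2 : (0:ℝ) ≤ b ⬝ᵥ Q *ᵥ b := by simpa using hQ.posSemidef.dotProduct_mulVec_nonneg b
  have hA : a = 0 := by
    by_contra hne
    have := hQ.dotProduct_mulVec_pos hne
    simp only [star_trivial] at this
    linarith [this, h2, hre.symm]
  have hB : b = 0 := by
    by_contra hne
    have := hQ.dotProduct_mulVec_pos hne
    simp only [star_trivial] at this
    linarith [this, h1, hre.symm]
  funext i
  have := congrFun hA i
  have := congrFun hB i
  exact Complex.ext (congrFun hA i) (congrFun hB i)

/-- Kernel analysis in the proof of Lemma 3: if `P_H^y(λ) ν̂ = 0` with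
`ν̂ = (ν_s, ν_{c1}, ν_{c2})`, then with `ν̃ = −Q C ν_{c1}` one has `ν̃ᴴ Q⁻¹ ν̃ = 0` and hence
`C ν_{c1} = 0`. -/
theorem stmt19 {n m p : ℕ} (A : Matrix (Fin n) (Fin n) ℝ) (B : Matrix (Fin n) (Fin m) ℝ)
    (C : Matrix (Fin p) (Fin n) ℝ) (Q : Matrix (Fin p) (Fin p) ℝ)
    (hQ : Q.PosDef) (l : ℂ) (hl : l.re = 0)
    (νs νc1 : Fin n → ℂ) (νc2 : Fin m → ℂ)
    (h : (HamMatY A B C Q l).mulVec (Sum.elim (Sum.elim νs νc1) νc2) = 0) :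
    (star (-(Q.map Complex.ofReal).mulVec ((C.map Complex.ofReal).mulVec νc1)) ⬝ᵥ
        ((Q.map Complex.ofReal)⁻¹).mulVec
          (-(Q.map Complex.ofReal).mulVec ((C.map Complex.ofReal).mulVec νc1))) = 0 ∧
      (C.map Complex.ofReal).mulVec νc1 = 0 := by
  set Ac := A.map Complex.ofReal
  set Bc := B.map Complex.ofReal
  set Cc := C.map Complex.ofReal
  set Qc := Q.map Complex.ofReal
  -- conjugate of l
  have hlc : (starRingEnd ℂ) l = -l := by
    apply Complex.ext <;> simp [hl]
  -- decompose h
  rw [HamMatY, fromBlocks_mulVec] at h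
  have hcl : (Sum.elim (Sum.elim νs νc1) νc2) ∘ Sum.inl = Sum.elim νs νc1 := rfl
  have hcr : (Sum.elim (Sum.elim νs νc1) νc2) ∘ Sum.inr = νc2 := rfl
  rw [hcl, hcr, fromBlocks_mulVec, fromRows_mulVec, fromCols_mulVec_sumElim] at h
  have hc1 : (Sum.elim νs νc1) ∘ Sum.inl = νs := rfl
  have hc2 : (Sum.elim νs νc1) ∘ Sum.inr = νc1 := rfl
  rw [hc1, hc2] at h
  have hE1 : (l • (1 : Matrix (Fin n) (Fin n) ℂ) - Ac) *ᵥ νc1 + Bc *ᵥ νc2 = 0 := by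
    funext i
    have := congrFun h (Sum.inl (Sum.inl i))
    simpa using this
  have hE2 : (-(l • (1 : Matrix (Fin n) (Fin n) ℂ)) - Acᵀ) *ᵥ νs - (Ccᵀ * Qc * Cc) *ᵥ νc1 = 0 := by
    funext i
    have := congrFun h (Sum.inl (Sum.inr i))
    simpa [neg_mulVec, sub_eq_add_neg] using this
  have hE3 : Bcᵀ *ᵥ νs = 0 := by
    funext i
    have := congrFun h (Sum.inr i)
    simpa [neg_mulVec, neg_eq_zero] using this
  have hAH : Acᴴ = Acᵀ := by
    ext i j; simp [Ac, conjTranspose_apply, Matrix.map_apply]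
  have hBH : Bcᴴ = Bcᵀ := by
    ext i j; simp [Bc, conjTranspose_apply, Matrix.map_apply]
  have hCH : Ccᴴ = Ccᵀ := by
    ext i j; simp [Cc, conjTranspose_apply, Matrix.map_apply]
  -- key scalar identity
  have key : star (Cc *ᵥ νc1) ⬝ᵥ Qc *ᵥ (Cc *ᵥ νc1) = 0 := by
    -- rewrite star (Cc *ᵥ νc1) = Cc *ᵥ star νc1
    have hstarC : star (Cc *ᵥ νc1) = Cc *ᵥ star νc1 := by
      rw [star_mulVec, hCH, vecMul_transpose]
    -- from hE2 : (CᵀQC) νc1 = -l νs - Aᵀ νs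
    have hE2' : (Ccᵀ * Qc * Cc) *ᵥ νc1 = -(l • νs) - Acᵀ *ᵥ νs := by
      have := sub_eq_zero.mp hE2
      rw [← this]
      simp [add_mulVec, sub_mulVec, neg_mulVec, smul_mulVec]
    -- conj of hE1
    have hE1' : -(l • star νc1) - Ac *ᵥ star νc1 + Bc *ᵥ star νc2 = 0 := by
      have h1 : (l • (1 : Matrix (Fin n) (Fin n) ℂ) - Ac) *ᵥ νc1 = l • νc1 - Ac *ᵥ νc1 := by
        simp [sub_mulVec, smul_mulVec]
      have := congrArg star hE1
      rw [h1, star_add, star_sub, star_smul, star_mulVec, star_mulVec, hAH, hBH,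
        vecMul_transpose, vecMul_transpose, star_zero] at this
      simpa [Complex.star_def, hlc, neg_smul] using this
    -- pairing
    have hBterm : νs ⬝ᵥ (Bc *ᵥ star νc2) = 0 := by
      rw [dotProduct_mulVec, ← mulVec_transpose, hE3]
      simp
    have hpair : νs ⬝ᵥ (Ac *ᵥ star νc1) = -(l * (νs ⬝ᵥ star νc1)) := by
      have := congrArg (fun w => νs ⬝ᵥ w) hE1'
      simp only [dotProduct_add, dotProduct_sub, dotProduct_neg, dotProduct_smul,
        dotProduct_zero, hBterm] at this
      have h' : -(l * (νs ⬝ᵥ star νc1)) - νs ⬝ᵥ (Ac *ᵥ star νc1) = 0 := by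
        simpa [smul_eq_mul] using this
      linear_combination -h'
    calc star (Cc *ᵥ νc1) ⬝ᵥ Qc *ᵥ (Cc *ᵥ νc1)
        = star νc1 ⬝ᵥ ((Ccᵀ * Qc * Cc) *ᵥ νc1) := by
          simp only [hstarC, dotProduct_mulVec, ← vecMul_vecMul, vecMul_transpose]
      _ = star νc1 ⬝ᵥ (-(l • νs) - Acᵀ *ᵥ νs) := by rw [hE2']
      _ = 0 := by
          have hcomm : star νc1 ⬝ᵥ (Acᵀ *ᵥ νs) = νs ⬝ᵥ (Ac *ᵥ star νc1) := by
            rw [dotProduct_mulVec, vecMul_transpose, dotProduct_comm]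
          simp only [dotProduct_sub, dotProduct_neg, dotProduct_smul, hcomm, hpair,
            smul_eq_mul]
          rw [dotProduct_comm]
          ring
  have hCv : Cc *ᵥ νc1 = 0 := ker_of_quad hQ _ key
  refine ⟨?_, hCv⟩
  rw [hCv]
  simp
end
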